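/- arXiv:1510.05113 — 10 statements merged into one kernel-verified Lean document; each statement's English description precedes it below -/
import Mathlib

section
/- Let H = (V,H) be a finite simplicial complex and suppose X ⊆ V is a transversal of the successive differences of a chain F₀ ⊂ F₁ ⊂ … ⊂ F_k of flats of H, i.e. X = {x₁,…,x_k} with x_i ∈ F_i \ F_{i−1} for each i. Then {x₁,…,x_i} ∈ H for every i = 0,…,k; in particular X ∈ H. -/
open scoped Classical

variable {V : Type}

def IsSC (faces : Set (Finset V)) : Prop :=
  (∀ v : V, ({v} : Finset V) ∈ faces) ∧
    ∀ ⦃X Y : Finset V⦄, X ∈ faces → Y ⊆ X → Y ∈ faces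

def IsFlat (faces : Set (Finset V)) (F : Set V) : Prop :=
  ∀ I ∈ faces, (I : Set V) ⊆ F → ∀ p ∉ F, insert p I ∈ faces

def cl (faces : Set (Finset V)) (X : Set V) : Set V :=
  ⋂₀ {F : Set V | IsFlat faces F ∧ X ⊆ F}

def BRep (faces : Set (Finset V)) : Prop :=
  ∀ X ∈ faces, ∃ (k : ℕ) (F : Fin (k + 1) → Set V) (x : Fin k → V),
    (∀ i, IsFlat faces (F i)) ∧ StrictMono F ∧ Function.Injective x ∧
    (∀ i : Fin k, x i ∈ F i.succ \ F i.castSucc) ∧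
    X = Finset.image x Finset.univ

def skel (faces : Set (Finset V)) : SimpleGraph V where
  Adj p q := p ≠ q ∧ ({p, q} : Finset V) ∈ faces
  symm := by
    constructor
    rintro p q ⟨h1, h2⟩
    exact ⟨h1.symm, by rwa [Finset.pair_comm]⟩
  loopless := by constructor; rintro p ⟨h, _⟩; exact h rfl

def flatGraph (faces : Set (Finset V)) : SimpleGraph V where
  Adj p q := p ≠ q ∧ cl faces {p, q} ≠ Set.univ
  symm := by
    constructor
    rintro p q ⟨h1, h2⟩
    exact ⟨h1.symm, by rwa [Set.pair_comm]⟩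
  loopless := by constructor; rintro p ⟨h, _⟩; exact h rfl
theorem transversal_prefixes_are_faces [Fintype V] [Nonempty V]
    {faces : Set (Finset V)} (hsc : IsSC faces)
    (k : ℕ) (F : Fin (k + 1) → Set V) (hflat : ∀ i, IsFlat faces (F i))
    (hchain : StrictMono F) (x : Fin k → V) (hinj : Function.Injective x)
    (hx : ∀ i : Fin k, x i ∈ F i.succ \ F i.castSucc) :
    ∀ i : ℕ, i ≤ k →
      (Finset.univ.filter (fun j : Fin k => (j : ℕ) < i)).image x ∈ faces := by
  intro i
  induction i with
  | zero =>
    intro _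
    have h0 : (Finset.univ.filter (fun j : Fin k => (j : ℕ) < 0)) = ∅ := by simp
    rw [h0, Finset.image_empty]
    obtain ⟨v⟩ := (inferInstance : Nonempty V)
    exact hsc.2 (hsc.1 v) (Finset.empty_subset _)
  | succ i ih =>
    intro hi
    have hik : i < k := hi
    set S := (Finset.univ.filter fun j : Fin k => (j : ℕ) < i).image x with hSdef
    have hS : S ∈ faces := ih (le_of_lt hik)
    have hsub : (S : Set V) ⊆ F ⟨i, Nat.lt_succ_of_lt hik⟩ := by
      intro v hv
      simp only [hSdef, Finset.coe_image, Set.mem_image, Finset.mem_coe,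
        Finset.mem_filter, Finset.mem_univ, true_and] at hv
      obtain ⟨j, hj, rfl⟩ := hv
      have h1 : (j.succ : Fin (k+1)) ≤ ⟨i, Nat.lt_succ_of_lt hik⟩ := by
        simpa [Fin.le_def] using Nat.succ_le_of_lt hj
      exact hchain.monotone h1 (hx j).1
    have hnot : x ⟨i, hik⟩ ∉ F ⟨i, Nat.lt_succ_of_lt hik⟩ := by
      have := (hx ⟨i, hik⟩).2
      simpa [Fin.castSucc] using this
    have hnew : insert (x ⟨i, hik⟩) S ∈ faces :=
      hflat _ S hS hsub _ hnot
    have heq : (Finset.univ.filter (fun j : Fin k => (j : ℕ) < i + 1)).image x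
        = insert (x ⟨i, hik⟩) S := by
      rw [hSdef, ← Finset.image_insert]
      congr 1
      ext j
      simp only [Finset.mem_insert, Finset.mem_filter, Finset.mem_univ, true_and,
        Nat.lt_succ_iff_lt_or_eq]
      constructor
      · rintro (h | h)
        · exact Or.inr h
        · exact Or.inl (Fin.ext h)
      · rintro (rfl | h)
        · exact Or.inr rfl
        · exact Or.inl h
    rw [heq]
    exact hnew
end

section
/- Let H = (V,H) be a boolean representable simplicial complex. Then for distinct p, q ∈ V, the pair {p,q} is not a face of H if and only if the closures of {p}, {p,q}, and {q} in the lattice of flats all coincide. -/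
open scoped Classical

variable {V : Type}

lemma cl_mono {faces : Set (Finset V)} {X Y : Set V} (h : X ⊆ Y) :
    cl faces X ⊆ cl faces Y := by
  apply Set.sInter_subset_sInter
  rintro F ⟨hF, hYF⟩
  exact ⟨hF, h.trans hYF⟩

lemma key_fwd {faces : Set (Finset V)} (hsc : IsSC faces) {r s : V}
    (hn : ({r, s} : Finset V) ∉ faces) :
    cl faces {r} = cl faces ({r, s} : Set V) := by
  apply Set.Subset.antisymm (cl_mono (by simp))
  intro a ha
  intro F hF
  obtain ⟨hflat, hrF⟩ := hF
  have hsF : s ∈ F := by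
    by_contra hs
    have h1 : ({r} : Finset V) ∈ faces := hsc.1 r
    have h2 : (({r} : Finset V) : Set V) ⊆ F := by
      simpa using hrF rfl
    have := hflat _ h1 h2 s hs
    rw [show insert s ({r} : Finset V) = {r, s} from Finset.pair_comm s r] at this
    exact hn this
  exact ha F ⟨hflat, by rintro x (rfl | rfl) <;> [exact hrF rfl; exact hsF]⟩

theorem pair_not_face_iff_closures_eq [Fintype V] [Nonempty V]
    {faces : Set (Finset V)} (hsc : IsSC faces) (hbr : BRep faces)
    (p q : V) (hpq : p ≠ q) :
    ({p, q} : Finset V) ∉ faces ↔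
      cl faces {p} = cl faces ({p, q} : Set V) ∧
        cl faces {q} = cl faces ({p, q} : Set V) := by
  constructor
  · intro hnf
    refine ⟨key_fwd hsc hnf, ?_⟩
    rw [Set.pair_comm]
    exact key_fwd hsc (by rwa [Finset.pair_comm])
  · rintro ⟨hp, hq⟩ hface
    obtain ⟨k, F, x, hflat, hmono, hinj, hsd, himg⟩ := hbr _ hface
    have hk : k = 2 := by
      have h1 : (Finset.image x Finset.univ).card = k := by
        rw [Finset.card_image_of_injective _ hinj, Finset.card_univ, Fintype.card_fin]
      have h2 : ({p, q} : Finset V).card = 2 := Finset.card_pair hpq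
      rw [← himg, h2] at h1
      omega
    subst hk
    have h0 : x 0 ∈ ({p, q} : Finset V) := by
      rw [himg]; exact Finset.mem_image_of_mem x (Finset.mem_univ 0)
    have h1 : x 1 ∈ ({p, q} : Finset V) := by
      rw [himg]; exact Finset.mem_image_of_mem x (Finset.mem_univ 1)
    have hne : x 0 ≠ x 1 := fun h => by simpa using hinj h
    simp only [Finset.mem_insert, Finset.mem_singleton] at h0 h1
    -- F 1 contains x 0 but not x 1
    have hx0 : x 0 ∈ F 1 := by
      have := (hsd 0).1
      simpa using this
    have hx1 : x 1 ∉ F 1 := by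
      have := (hsd 1).2
      simpa using this
    have hq' : q ∈ cl faces ({p, q} : Set V) := fun G hG => hG.2 (by simp)
    have hp' : p ∈ cl faces ({p, q} : Set V) := fun G hG => hG.2 (by simp)
    rcases h0 with rfl | rfl
    · rcases h1 with h | rfl
      · exact hne h.symm
      rw [← hp] at hq'
      exact hx1 (hq' (F 1) ⟨hflat 1, by simpa using hx0⟩)
    · rcases h1 with rfl | h
      · rw [← hq] at hp'
        exact hx1 (hp' (F 1) ⟨hflat 1, by simpa using hx0⟩)
      · exact hne h.symm
end

section
/- Let H = (V,H) be a boolean representable simplicial complex. Then for every p ∈ V, the closure of {p} equals the set {q ∈ V : cl({q}) = cl({p})}; in particular this set is a flat. -/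
open scoped Classical

variable {V : Type}

def linked (faces : Set (Finset V)) (p q : V) : Prop :=
  q ∈ cl faces {p} ∧ p ∈ cl faces {q}

lemma subset_cl (faces : Set (Finset V)) (X : Set V) : X ⊆ cl faces X := by
  intro x hx
  rw [cl, Set.mem_sInter]
  rintro F ⟨-, hXF⟩
  exact hXF hx

lemma mem_of_mem_cl {faces : Set (Finset V)} {X : Set V} {q : V}
    (h : q ∈ cl faces X) {F : Set V} (hF : IsFlat faces F) (hXF : X ⊆ F) : q ∈ F := by
  rw [cl, Set.mem_sInter] at h
  exact h F ⟨hF, hXF⟩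

lemma cl_isFlat (faces : Set (Finset V)) (X : Set V) : IsFlat faces (cl faces X) := by
  intro I hI hsub r hr
  rw [cl, Set.mem_sInter] at hr
  push_neg at hr
  obtain ⟨F, hF, hrF⟩ := hr
  exact hF.1 I hI (hsub.trans (Set.sInter_subset_of_mem hF)) r hrF

lemma mem_cl_of_nonadj {faces : Set (Finset V)} (hsc : IsSC faces) {p q : V}
    (h : ({q, p} : Finset V) ∉ faces) : q ∈ cl faces {p} := by
  rw [cl, Set.mem_sInter]
  rintro F ⟨hF, hpF⟩
  by_contra hq
  exact h (hF {p} (hsc.1 p) (by simpa using hpF) q hq)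

lemma linked_refl (faces : Set (Finset V)) (p : V) : linked faces p p :=
  ⟨subset_cl faces {p} rfl, subset_cl faces {p} rfl⟩

lemma linked_symm {faces : Set (Finset V)} {p q : V} (h : linked faces p q) :
    linked faces q p := ⟨h.2, h.1⟩

lemma linked_trans {faces : Set (Finset V)} {p q r : V}
    (h1 : linked faces p q) (h2 : linked faces q r) : linked faces p r := by
  constructor
  · rw [cl, Set.mem_sInter]
    rintro F ⟨hF, hpF⟩
    have hq : q ∈ F := mem_of_mem_cl h1.1 hF hpF
    exact mem_of_mem_cl h2.1 hF (Set.singleton_subset_iff.2 hq)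
  · rw [cl, Set.mem_sInter]
    rintro F ⟨hF, hrF⟩
    have hq : q ∈ F := mem_of_mem_cl h2.2 hF hrF
    exact mem_of_mem_cl h1.2 hF (Set.singleton_subset_iff.2 hq)

/-- Core use of boolean representability: a face whose elements are all
linked to a fixed point `a` has at most one element. -/
lemma card_le_one_of_linked {faces : Set (Finset V)} (hbr : BRep faces) (a : V)
    {I : Finset V} (hI : I ∈ faces) (hlink : ∀ v ∈ I, linked faces a v) :
    I.card ≤ 1 := by
  obtain ⟨k, F, x, hflat, hmono, hinj, hdiff, hX⟩ := hbr I hI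
  have hcard : I.card = k := by
    rw [hX, Finset.card_image_of_injective _ hinj, Finset.card_univ, Fintype.card_fin]
  rw [hcard]
  by_contra hk
  push_neg at hk
  have h2 : 2 ≤ k := hk
  set i0 : Fin k := ⟨0, by omega⟩ with hi0
  set i1 : Fin k := ⟨1, by omega⟩ with hi1
  have hmem0 : x i0 ∈ I := by
    rw [hX]; exact Finset.mem_image_of_mem x (Finset.mem_univ _)
  have hmem1 : x i1 ∈ I := by
    rw [hX]; exact Finset.mem_image_of_mem x (Finset.mem_univ _)
  have heq : i0.succ = i1.castSucc := by
    apply Fin.ext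
    simp [hi0, hi1]
  have ha : a ∈ F i0.succ :=
    mem_of_mem_cl (hlink _ hmem0).2 (hflat _)
      (Set.singleton_subset_iff.2 (hdiff i0).1)
  have hx1 : x i1 ∈ F i0.succ :=
    mem_of_mem_cl (hlink _ hmem1).1 (hflat _) (Set.singleton_subset_iff.2 ha)
  rw [heq] at hx1
  exact (hdiff i1).2 hx1

lemma class_isFlat {faces : Set (Finset V)} (hsc : IsSC faces) (hbr : BRep faces)
    (p : V) : IsFlat faces {q : V | linked faces p q} := by
  intro I hI hsub r hr
  have hc : I.card ≤ 1 := card_le_one_of_linked hbr p hI (fun v hv => hsub hv)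
  by_cases hIe : I = ∅
  · simpa [hIe] using hsc.1 r
  · obtain ⟨q, rfl⟩ := Finset.card_eq_one.mp
      (le_antisymm hc (Finset.card_pos.2 (Finset.nonempty_iff_ne_empty.2 hIe)))
    have hlq : linked faces p q := hsub (by simp)
    by_contra hn
    have h1 : r ∈ cl faces {q} := mem_cl_of_nonadj hsc hn
    have h2 : q ∈ cl faces {r} := mem_cl_of_nonadj hsc (by rwa [Finset.pair_comm] at hn)
    exact hr (linked_trans hlq ⟨h1, h2⟩)

lemma cl_singleton_eq_class {faces : Set (Finset V)} (hsc : IsSC faces)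
    (hbr : BRep faces) (p : V) : cl faces {p} = {q : V | linked faces p q} := by
  apply subset_antisymm
  · exact Set.sInter_subset_of_mem
      ⟨class_isFlat hsc hbr p, Set.singleton_subset_iff.2 (linked_refl faces p)⟩
  · intro q hq
    exact hq.1

theorem closure_singleton_eq [Fintype V] [Nonempty V]
    {faces : Set (Finset V)} (hsc : IsSC faces) (hbr : BRep faces) (p : V) :
    cl faces {p} = {q : V | cl faces {q} = cl faces {p}} ∧
      IsFlat faces {q : V | cl faces {q} = cl faces {p}} := by
  have key : ∀ q : V, cl faces {q} = cl faces {p} ↔ linked faces p q := by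
    intro q
    constructor
    · intro h
      exact ⟨h ▸ subset_cl faces {q} rfl, h.symm ▸ subset_cl faces {p} rfl⟩
    · intro h
      rw [cl_singleton_eq_class hsc hbr q, cl_singleton_eq_class hsc hbr p]
      ext r
      simp only [Set.mem_setOf_eq]
      exact ⟨fun hq => linked_trans h hq, fun hp => linked_trans (linked_symm h) hp⟩
  have hset : {q : V | cl faces {q} = cl faces {p}} = cl faces {p} := by
    ext q
    rw [Set.mem_setOf_eq, key, cl_singleton_eq_class hsc hbr p]
    rfl
  refine ⟨hset.symm, ?_⟩
  rw [hset]
  exact cl_isFlat faces {p}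
end

section
/- Let H = (V,H) be a boolean representable simplicial complex. Then H is connected (its 1-skeleton graph on vertex set V with edges the 2-element faces is a connected graph) unless H consists only of the singletons (H = P₁(V)) and |V| > 1. -/
open scoped Classical

variable {V : Type}

/-- `a` and `b` are separated by some flat. -/
def FlatSep (faces : Set (Finset V)) (a b : V) : Prop :=
  ∃ F : Set V, IsFlat faces F ∧ ¬ (a ∈ F ↔ b ∈ F)

lemma adj_of_sep {faces : Set (Finset V)} (hsc : IsSC faces) {a b : V}
    (h : FlatSep faces a b) : (skel faces).Adj a b := by
  obtain ⟨F, hF, hab⟩ := h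
  have hne : a ≠ b := by rintro rfl; exact hab Iff.rfl
  refine ⟨hne, ?_⟩
  by_cases ha : a ∈ F
  · have hb : b ∉ F := fun hb => hab ⟨fun _ => hb, fun _ => ha⟩
    have := hF {a} (hsc.1 a) (by simpa using ha) b hb
    simpa [Finset.pair_comm] using this
  · have hb : b ∈ F := by
      by_contra hb; exact hab ⟨fun h => absurd h ha, fun h => absurd h hb⟩
    have := hF {b} (hsc.1 b) (by simpa using hb) a ha
    simpa using this

lemma sep_of_adj {faces : Set (Finset V)} (hbr : BRep faces) {a b : V}
    (h : (skel faces).Adj a b) : FlatSep faces a b := by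
  obtain ⟨hne, hmem⟩ := h
  obtain ⟨k, F, x, hflat, hmono, hinj, hsep, heq⟩ := hbr _ hmem
  have hk : k = 2 := by
    have h1 : (Finset.image x Finset.univ).card = k := by
      rw [Finset.card_image_of_injective _ hinj, Finset.card_univ, Fintype.card_fin]
    have h2 : ({a, b} : Finset V).card = 2 := Finset.card_pair hne
    rw [← heq, h2] at h1
    omega
  subst hk
  have ha : a ∈ Finset.image x Finset.univ := by
    rw [← heq]; simp
  have hb : b ∈ Finset.image x Finset.univ := by
    rw [← heq]; simp
  obtain ⟨i, -, hi⟩ := Finset.mem_image.mp ha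
  obtain ⟨j, -, hj⟩ := Finset.mem_image.mp hb
  have hij : i ≠ j := by rintro rfl; exact hne (hi ▸ hj ▸ rfl)
  have h0 := hsep 0
  have h1 := hsep 1
  have e0 : (0 : Fin 2).succ = (1 : Fin 3) := rfl
  have e1 : (1 : Fin 2).castSucc = (1 : Fin 3) := rfl
  rw [e0] at h0
  rw [e1] at h1
  fin_cases i <;> fin_cases j <;> simp_all <;>
    exact ⟨F 1, hflat 1, by tauto⟩

theorem brep_connected [Fintype V] [Nonempty V]
    {faces : Set (Finset V)} (hsc : IsSC faces) (hbr : BRep faces)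
    (hnot : ¬ ((∀ X ∈ faces, X.card ≤ 1) ∧ 1 < Fintype.card V)) :
    (skel faces).Connected := by
  by_cases hcard : 1 < Fintype.card V
  · have hbig : ¬ ∀ X ∈ faces, X.card ≤ 1 := fun h => hnot ⟨h, hcard⟩
    push_neg at hbig
    obtain ⟨X, hX, hX1⟩ := hbig
    obtain ⟨p, hp, q, hq, hpq⟩ := Finset.one_lt_card.mp hX1
    have hpqf : ({p, q} : Finset V) ∈ faces :=
      hsc.2 hX (by intro z hz; simp at hz; rcases hz with rfl | rfl <;> assumption)
    have hsep : FlatSep faces p q := sep_of_adj hbr ⟨hpq, hpqf⟩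
    have key : ∀ v : V, (skel faces).Reachable v p := by
      intro v
      by_cases hv : FlatSep faces v p
      · exact (adj_of_sep hsc hv).reachable
      · by_cases hvp : v = p
        · exact hvp ▸ SimpleGraph.Reachable.refl v
        · have hvq : FlatSep faces v q := by
            obtain ⟨F, hF, hPQ⟩ := hsep
            refine ⟨F, hF, fun hVQ => ?_⟩
            exact hv ⟨F, hF, by tauto⟩
          have h1 : (skel faces).Reachable v q := (adj_of_sep hsc hvq).reachable
          have h2 : (skel faces).Reachable q p :=
            ((adj_of_sep hsc hsep).symm).reachable
          exact h1.trans h2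
    exact ⟨fun a b => (key a).trans (key b).symm⟩
  · have : Fintype.card V ≤ 1 := by omega
    have hsub : Subsingleton V := Fintype.card_le_one_iff_subsingleton.mp this
    refine ⟨fun a b => ?_⟩
    rw [Subsingleton.elim a b]
end

section
/- Let H = (V,H) be a connected boolean representable simplicial complex, and let Γ be its graph of flats (vertex set V, with an edge p—q whenever p ≠ q and cl({p,q}) ≠ V). If u and v lie in distinct connected components of Γ, then {u,v} ∈ H. -/
open scoped Classical

variable {V : Type}

theorem distinct_flat_components_pair_face [Fintype V] [Nonempty V]
    {faces : Set (Finset V)} (hsc : IsSC faces) (hbr : BRep faces)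
    (hconn : (skel faces).Connected) (u v : V)
    (hsep : ¬ (flatGraph faces).Reachable u v) :
    ({u, v} : Finset V) ∈ faces := by
  classical
  by_contra hne_face
  have hne : u ≠ v := by rintro rfl; exact hsep (SimpleGraph.Reachable.refl _)
  -- Chain lemma: every face of size at least 2 has an element in a proper flat
  have chainlem : ∀ I ∈ faces, 2 ≤ I.card →
      ∃ G, IsFlat faces G ∧ G ≠ Set.univ ∧ ∃ a ∈ I, a ∈ G := by
    intro I hI hcard
    obtain ⟨k, F, x, hflat, hmono, hinj, hmem, hIeq⟩ := hbr I hI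
    have hk : I.card = k := by
      rw [hIeq, Finset.card_image_of_injective _ hinj, Finset.card_univ, Fintype.card_fin]
    have hk2 : 2 ≤ k := hk ▸ hcard
    have h0 : (0:ℕ) < k := by omega
    refine ⟨F (⟨0, h0⟩ : Fin k).succ, hflat _, ?_, x ⟨0, h0⟩, ?_, (hmem ⟨0, h0⟩).1⟩
    · intro habs
      have hlt : (⟨0, h0⟩ : Fin k).succ < Fin.last k := by
        rw [Fin.lt_def, Fin.val_succ, Fin.val_last]; simp; omega
      have h2 := hmono hlt
      rw [habs] at h2
      exact lt_irrefl _ (lt_of_lt_of_le h2 (Set.subset_univ _))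
    · rw [hIeq]; exact Finset.mem_image_of_mem x (Finset.mem_univ _)
  -- every flat containing u contains v
  have stepA : ∀ G : Set V, IsFlat faces G → u ∈ G → v ∈ G := by
    intro G hG hu
    by_contra hv
    have h1 := hG {u} (hsc.1 u) (by simpa using hu) v hv
    exact hne_face (by rw [Finset.pair_comm]; exact h1)
  -- no proper flat contains u
  have huT : ∀ G : Set V, IsFlat faces G → u ∈ G → G = Set.univ := by
    intro G hG hu
    by_contra hGne
    have hv := stepA G hG hu
    have hcl : cl faces {u, v} ≠ Set.univ := by
      intro habs
      have hsub : cl faces ({u, v} : Set V) ⊆ G :=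
        Set.sInter_subset_of_mem ⟨hG, Set.insert_subset_iff.mpr ⟨hu,
          Set.singleton_subset_iff.mpr hv⟩⟩
      rw [habs] at hsub
      exact hGne (Set.eq_univ_of_univ_subset hsub)
    exact hsep (SimpleGraph.Adj.reachable ⟨hne, hcl⟩)
  -- get a skeleton neighbor w of u
  obtain ⟨p⟩ := hconn.preconnected u v
  cases p with
  | nil => exact hne rfl
  | cons h p' =>
    rename_i w
    obtain ⟨huw, hface⟩ := h
    have hcard : ({u, w} : Finset V).card = 2 := Finset.card_pair huw
    obtain ⟨G, hG, hGne, a, haI, haG⟩ := chainlem _ hface (by rw [hcard])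
    have hwG : w ∈ G := by
      rcases Finset.mem_insert.mp haI with rfl | ha
      · exact absurd (huT G hG haG) hGne
      · rwa [Finset.mem_singleton.mp ha] at haG
    set T : Set V := {x | ∀ G : Set V, IsFlat faces G → x ∈ G → G = Set.univ} with hT
    have hwT : w ∉ T := fun hw => hGne (hw G hG hwG)
    have hTflat : IsFlat faces T := by
      intro I hI hIT q hq
      have hIcard : I.card ≤ 1 := by
        by_contra hc
        push_neg at hc
        obtain ⟨G', hG', hG'ne, b, hbI, hbG'⟩ := chainlem I hI (by omega)
        exact hG'ne (hIT (Finset.mem_coe.mpr hbI) G' hG' hbG')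
      have hq' : ∃ Gq, IsFlat faces Gq ∧ q ∈ Gq ∧ Gq ≠ Set.univ := by
        by_contra hcon
        push_neg at hcon
        exact hq (fun Gq hGq hqGq => by
          by_contra hGqne
          exact hGqne (hcon Gq hGq hqGq))
      obtain ⟨Gq, hGq, hqGq, hGqne⟩ := hq'
      rcases I.eq_empty_or_nonempty with rfl | ⟨t, ht⟩
      · simpa using hsc.1 q
      · have hc1 : I.card = 1 := le_antisymm hIcard (Finset.card_pos.mpr ⟨t, ht⟩)
        obtain ⟨s, rfl⟩ := Finset.card_eq_one.mp hc1
        have hsT : s ∈ T := hIT (by simp)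
        have hsGq : s ∉ Gq := fun hmem => hGqne (hsT Gq hGq hmem)
        have h2 := hGq {q} (hsc.1 q) (by simpa using hqGq) s hsGq
        rwa [Finset.pair_comm] at h2
    have huTmem : u ∈ T := huT
    have hTuniv : T = Set.univ := huT T hTflat huTmem
    exact hwT (hTuniv ▸ Set.mem_univ w)
end

section
/- Let M = (V,H) be a matroid of dimension at least 2. Then for all distinct p, q ∈ V, the closure of {p,q} is a proper subset of V; consequently the graph of flats of M is the complete graph on V. -/
open scoped Classical

variable {V : Type}

def ExchangeProp (faces : Set (Finset V)) : Prop :=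
  ∀ I ∈ faces, ∀ J ∈ faces, I.card = J.card + 1 →
    ∃ i ∈ I \ J, insert i J ∈ faces

theorem matroid_flatGraph_complete [Fintype V] [Nonempty V]
    {faces : Set (Finset V)} (hsc : IsSC faces) (hex : ExchangeProp faces)
    (hdim : ∃ X ∈ faces, 3 ≤ X.card) (p q : V) (hpq : p ≠ q) :
    cl faces ({p, q} : Set V) ≠ Set.univ ∧ (flatGraph faces).Adj p q := by
  -- basic facts about faces
  have hempty : (∅ : Finset V) ∈ faces := by
    obtain ⟨v⟩ := ‹Nonempty V›
    exact hsc.2 (hsc.1 v) (Finset.empty_subset _)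
  have hsub : ∀ ⦃I J : Finset V⦄, I ∈ faces → J ⊆ I → J ∈ faces := hsc.2
  have haug : ∀ ⦃I J : Finset V⦄, I ∈ faces → J ∈ faces → I.card < J.card →
      ∃ e ∈ J, e ∉ I ∧ insert e I ∈ faces := by
    intro I J hI hJ hlt
    obtain ⟨J', hJ'sub, hJ'card⟩ := Finset.exists_subset_card_eq (n := I.card + 1) hlt
    obtain ⟨i, hi, hins⟩ := hex J' (hsub hJ hJ'sub) I hI (by omega)
    rw [Finset.mem_sdiff] at hi
    exact ⟨i, hJ'sub hi.1, hi.2, hins⟩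
  -- build the Mathlib matroid
  set M : Matroid V := (IndepMatroid.ofFinset (Set.univ : Set V) (· ∈ faces)
    hempty (fun I J hJ hIJ => hsub hJ hIJ) (fun I J hI hJ h => haug hI hJ h)
    (fun I _ => Set.subset_univ _)).matroid with hM
  have hE : M.E = Set.univ := rfl
  have hIndep : ∀ {I : Finset V}, M.Indep (I : Set V) ↔ I ∈ faces := by
    intro I
    rw [hM, IndepMatroid.matroid_indep_iff, IndepMatroid.ofFinset_indep]
  -- the key flat
  set F : Set V := M.closure {p, q} with hF
  have hpqF : ({p, q} : Set V) ⊆ F := M.subset_closure _ (by simp [hE])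
  have hFflat : IsFlat faces F := by
    intro I hIfaces hIF x hxF
    have hIindep : M.Indep (I : Set V) := hIndep.mpr hIfaces
    have hxI : x ∉ I := fun hxI => hxF (hIF hxI)
    have hclsub : M.closure (I : Set V) ⊆ F := by
      have := M.closure_subset_closure (X := (I : Set V)) (Y := F) hIF
      rwa [hF, M.closure_closure] at this
    have : M.Indep (insert x (I : Set V)) := by
      rw [hIindep.insert_indep_iff_of_notMem hxI]
      exact ⟨by simp [hE], fun hmem => hxF (hclsub hmem)⟩
    rw [← Finset.coe_insert] at this
    exact hIndep.mp this
  have hFne : F ≠ Set.univ := by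
    intro hFuniv
    obtain ⟨X, hX, hXcard⟩ := hdim
    obtain ⟨I, hI⟩ := M.exists_isBasis ({p, q} : Set V) (by simp [hE])
    have hIfin : I.Finite := (Set.toFinite _).subset hI.subset
    set I' : Finset V := hIfin.toFinset with hI'
    have hI'coe : (I' : Set V) = I := hIfin.coe_toFinset
    have hI'faces : I' ∈ faces := hIndep.mp (by rw [hI'coe]; exact hI.indep)
    have hI'card : I'.card ≤ 2 := by
      have : I' ⊆ {p, q} := by
        intro x hx
        have hxI : x ∈ I := by
          rw [← hI'coe]; exact Finset.mem_coe.mpr hx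
        have := hI.subset hxI
        simp only [Set.mem_insert_iff, Set.mem_singleton_iff] at this
        simp [this]
      calc I'.card ≤ ({p, q} : Finset V).card := Finset.card_le_card this
        _ ≤ 2 := (Finset.card_insert_le _ _).trans (by simp)
    obtain ⟨e, heX, heI', hins⟩ := haug hI'faces hX (by omega)
    have hinsIndep : M.Indep (insert e (I' : Set V)) := by
      rw [← Finset.coe_insert]
      exact hIndep.mpr hins
    have hI'indep : M.Indep (I' : Set V) := hIndep.mpr hI'faces
    have := (hI'indep.insert_indep_iff_of_notMem (by simpa using heI')).mp hinsIndep
    have hecl : e ∉ M.closure (I' : Set V) := this.2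
    apply hecl
    rw [hI'coe, hI.closure_eq_closure, ← hF, hFuniv]
    trivial
  refine ⟨?_, hpq, ?_⟩
  · intro hcl
    apply hFne
    apply Set.eq_univ_of_univ_subset
    rw [← hcl]
    exact Set.sInter_subset_of_mem ⟨hFflat, hpqF⟩
  · intro hcl
    apply hFne
    apply Set.eq_univ_of_univ_subset
    rw [← hcl]
    exact Set.sInter_subset_of_mem ⟨hFflat, hpqF⟩
end

section
/- Let H = (V,H) be a boolean representable simplicial complex, let τ ⊆ η be an equivalence relation on V (where a η b iff cl({a}) = cl({b})), let φ: V → V/τ be the projection, and define H/τ = { {a₁τ,…,a_kτ} : a₁…a_k ∈ H }. Then dim(H/τ) = dim(H). -/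
open scoped Classical

variable {V : Type}

def quotFaces (faces : Set (Finset V)) (τ : Setoid V) :
    Set (Finset (Quotient τ)) :=
  {Y | ∃ X ∈ faces, Y = X.image (Quotient.mk τ)}
noncomputable def dimSC {W : Type} (faces : Set (Finset W)) : ℕ :=
  sSup {n : ℕ | ∃ X ∈ faces, X.card = n + 1}

theorem dim_quot_eq [Fintype V] [Nonempty V]
    {faces : Set (Finset V)} (hsc : IsSC faces) (hbr : BRep faces)
    (τ : Setoid V) (hτ : ∀ a b : V, τ.r a b → cl faces {a} = cl faces {b}) :
    dimSC (quotFaces faces τ) = dimSC faces := by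
  -- key: on any face, elements with equal closures are equal
  have key : ∀ X ∈ faces, ∀ a ∈ X, ∀ b ∈ X, cl faces {a} = cl faces {b} → a = b := by
    intro X hX a ha b hb hcl
    by_contra hab
    obtain ⟨k, F, x, hflat, hmono, hinj, hstep, hXeq⟩ := hbr X hX
    rw [hXeq] at ha hb
    simp only [Finset.mem_image, Finset.mem_univ, true_and] at ha hb
    obtain ⟨i, rfl⟩ := ha
    obtain ⟨j, rfl⟩ := hb
    have hij : i ≠ j := fun h => hab (by rw [h])
    -- WLOG handle both orders
    have main : ∀ i j : Fin k, i < j → cl faces {x i} = cl faces {x j} → False := by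
      intro i j hlt hcl
      have h1 : x i ∈ F j.castSucc := by
        have : F i.succ ⊆ F j.castSucc := by
          rcases eq_or_lt_of_le (show i.succ ≤ j.castSucc by
            rw [Fin.le_def, Fin.val_succ, Fin.coe_castSucc]
            exact Fin.lt_def.mp hlt) with h | h
          · rw [h]
          · exact le_of_lt (hmono h)
        exact this (hstep i).1
      have h2 : cl faces {x i} ⊆ F j.castSucc :=
        Set.sInter_subset_of_mem ⟨hflat _, by simpa using h1⟩
      have h3 : x j ∈ cl faces {x j} := fun F hF => hF.2 rfl
      exact (hstep j).2 (h2 (hcl ▸ h3))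
    rcases lt_or_gt_of_ne hij with h | h
    · exact main i j h hcl
    · exact main j i h hcl.symm
  have hcard : ∀ X ∈ faces, (X.image (Quotient.mk τ)).card = X.card := by
    intro X hX
    apply Finset.card_image_of_injOn
    intro a ha b hb hq
    exact key X hX a ha b hb (hτ a b (Quotient.exact hq))
  unfold dimSC
  congr 1
  ext n
  constructor
  · rintro ⟨Y, ⟨X, hX, rfl⟩, hY⟩
    exact ⟨X, hX, by rw [← hcard X hX]; exact hY⟩
  · rintro ⟨X, hX, hXc⟩
    exact ⟨X.image (Quotient.mk τ), ⟨X, hX, rfl⟩, by rw [hcard X hX]; exact hXc⟩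
end

section
/- Let H = (V,H) be a boolean representable simplicial complex, let τ ⊆ η be an equivalence relation on V, let φ: V → V/τ be the projection, and let H/τ be the quotient complex with faces { Xφ : X ∈ H }. Then the flats of H are exactly the preimages under φ of the flats of H/τ: Fl(H) = { Fφ⁻¹ : F ∈ Fl(H/τ) }. -/
open scoped Classical

variable {V : Type}

lemma mem_flat_of_cl_eq {faces : Set (Finset V)} {F : Set V} (hF : IsFlat faces F)
    {a b : V} (h : cl faces {a} = cl faces {b}) (ha : a ∈ F) : b ∈ F := by
  have h1 : cl faces {a} ⊆ F := Set.sInter_subset_of_mem ⟨hF, by simpa using ha⟩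
  have h2 : b ∈ cl faces {b} := Set.mem_sInter.mpr fun S hS => hS.2 rfl
  exact h1 (h ▸ h2)

lemma chain_face [Nonempty V] {faces : Set (Finset V)} (hsc : IsSC faces) :
    ∀ (k : ℕ) (F : ℕ → Set V) (x : ℕ → V),
      (∀ i, i ≤ k → IsFlat faces (F i)) →
      (∀ i j, i ≤ j → j ≤ k → F i ⊆ F j) →
      (∀ i, i < k → x i ∈ F (i+1) ∧ x i ∉ F i) →
      (Finset.range k).image x ∈ faces := by
  intro k
  induction k with
  | zero =>
    intro F x _ _ _
    simpa using hsc.2 (hsc.1 (Classical.arbitrary V)) (Finset.empty_subset _)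
  | succ k ih =>
    intro F x hflat hmono hx
    have hI : (Finset.range k).image x ∈ faces :=
      ih F x (fun i hi => hflat i (by omega)) (fun i j h1 h2 => hmono i j h1 (by omega))
        (fun i hi => hx i (by omega))
    have hsub : ((Finset.range k).image x : Set V) ⊆ F k := by
      intro v hv
      simp only [Finset.coe_image, Finset.coe_range, Set.mem_image, Set.mem_Iio] at hv
      obtain ⟨i, hi, rfl⟩ := hv
      exact hmono (i+1) k (by omega) (by omega) (hx i (by omega)).1
    have hres := hflat k (by omega) _ hI hsub (x k) (hx k (by omega)).2
    rw [Finset.range_add_one, Finset.image_insert]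
    exact hres

lemma inj_on_face {faces : Set (Finset V)} (hbr : BRep faces) {X : Finset V}
    (hX : X ∈ faces) {a b : V} (ha : a ∈ X) (hb : b ∈ X)
    (h : cl faces {a} = cl faces {b}) : a = b := by
  obtain ⟨k, F, x, hflat, hsm, hinj, hx, hXeq⟩ := hbr X hX
  subst hXeq
  simp only [Finset.mem_image, Finset.mem_univ, true_and] at ha hb
  obtain ⟨i, rfl⟩ := ha; obtain ⟨j, rfl⟩ := hb
  rcases lt_trichotomy i j with hij | hij | hij
  · exfalso
    have hle : i.succ ≤ j.castSucc := by
      simp only [Fin.le_def, Fin.val_succ, Fin.coe_castSucc]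
      exact hij
    have h1 : x i ∈ F j.castSucc := hsm.monotone hle (hx i).1
    exact (hx j).2 (mem_flat_of_cl_eq (hflat _) h h1)
  · rw [hij]
  · exfalso
    have hle : j.succ ≤ i.castSucc := by
      simp only [Fin.le_def, Fin.val_succ, Fin.coe_castSucc]
      exact hij
    have h1 : x j ∈ F i.castSucc := hsm.monotone hle (hx j).1
    exact (hx i).2 (mem_flat_of_cl_eq (hflat _) h.symm h1)

lemma face_of_map [Nonempty V] {faces : Set (Finset V)} (hsc : IsSC faces)
    (hbr : BRep faces) {Z : Finset V} (hZ : Z ∈ faces) (σ : V → V)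
    (hσ : ∀ z ∈ Z, cl faces {σ z} = cl faces {z}) : Z.image σ ∈ faces := by
  obtain ⟨k, F, x, hflat, hsm, hinj, hx, hZeq⟩ := hbr Z hZ
  have hxZ : ∀ i : Fin k, x i ∈ Z := by
    intro i; rw [hZeq]; exact Finset.mem_image_of_mem _ (Finset.mem_univ i)
  have key := chain_face hsc k (fun n => F ⟨min n k, by omega⟩)
      (fun n => if h : n < k then σ (x ⟨n, h⟩) else Classical.arbitrary V)
      (fun i _ => hflat _)
      (fun i j h1 h2 => hsm.monotone (by simp only [Fin.mk_le_mk]; omega))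
      ?_
  · have heq : (Finset.range k).image
        (fun n => if h : n < k then σ (x ⟨n, h⟩) else Classical.arbitrary V) = Z.image σ := by
      ext v
      simp only [Finset.mem_image, Finset.mem_range, hZeq, Finset.mem_univ, true_and]
      constructor
      · rintro ⟨n, hn, hv⟩
        rw [dif_pos hn] at hv
        exact ⟨x ⟨n, hn⟩, ⟨⟨n, hn⟩, rfl⟩, hv⟩
      · rintro ⟨z, ⟨i, rfl⟩, hv⟩
        exact ⟨i.val, i.isLt, by rw [dif_pos i.isLt]; simp [hv]⟩
    rwa [heq] at key
  · intro i hi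
    simp only [dif_pos hi]
    have h1 : x ⟨i, hi⟩ ∈ F (⟨i, hi⟩ : Fin k).succ := (hx ⟨i, hi⟩).1
    have h2 : x ⟨i, hi⟩ ∉ F (⟨i, hi⟩ : Fin k).castSucc := (hx ⟨i, hi⟩).2
    have e1 : (⟨min (i+1) k, by omega⟩ : Fin (k+1)) = (⟨i, hi⟩ : Fin k).succ := by
      simp only [Fin.succ_mk, Fin.mk.injEq]; omega
    have e2 : (⟨min i k, by omega⟩ : Fin (k+1)) = (⟨i, hi⟩ : Fin k).castSucc := by
      simp only [Fin.castSucc_mk, Fin.mk.injEq]; omega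
    constructor
    · rw [e1]
      exact mem_flat_of_cl_eq (hflat _) (hσ _ (hxZ _)).symm h1
    · rw [e2]
      intro hc
      exact h2 (mem_flat_of_cl_eq (hflat _) (hσ _ (hxZ _)) hc)
theorem flats_eq_preimages_of_quot_flats [Fintype V] [Nonempty V]
    {faces : Set (Finset V)} (hsc : IsSC faces) (hbr : BRep faces)
    (τ : Setoid V) (hτ : ∀ a b : V, τ.r a b → cl faces {a} = cl faces {b}) :
    {F : Set V | IsFlat faces F} =
      {S : Set V | ∃ G : Set (Quotient τ),
        IsFlat (quotFaces faces τ) G ∧ S = Quotient.mk τ ⁻¹' G} := by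
  ext S
  simp only [Set.mem_setOf_eq]
  constructor
  · intro hF
    refine ⟨Quotient.mk τ '' S, ?_, ?_⟩
    · rintro J ⟨X, hX, rfl⟩ hJsub q hq
      obtain ⟨p, rfl⟩ := q.exists_rep
      have hXF : ∀ a ∈ X, a ∈ S := by
        intro a ha
        have : Quotient.mk τ a ∈ Quotient.mk τ '' S :=
          hJsub (by simp only [Finset.coe_image, Set.mem_image, Finset.mem_coe]; exact ⟨a, ha, rfl⟩)
        obtain ⟨b, hb, hba⟩ := this
        exact mem_flat_of_cl_eq hF (hτ b a (Quotient.exact hba)) hb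
      have hp : p ∉ S := fun hps => hq ⟨p, hps, rfl⟩
      have hins : insert p X ∈ faces := hF X hX (fun a ha => hXF a ha) p hp
      exact ⟨insert p X, hins, by rw [Finset.image_insert]; congr!⟩
    · ext v
      simp only [Set.mem_preimage, Set.mem_image]
      constructor
      · intro hv; exact ⟨v, hv, rfl⟩
      · rintro ⟨b, hb, hbv⟩
        exact mem_flat_of_cl_eq hF (hτ b v (Quotient.exact hbv)) hb
  · rintro ⟨G, hG, rfl⟩
    intro I hI hIsub p hp
    have hJ : I.image (Quotient.mk τ) ∈ quotFaces faces τ := ⟨I, hI, rfl⟩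
    have hJsub : ↑(I.image (Quotient.mk τ)) ⊆ G := by
      intro q hq
      simp only [Finset.coe_image, Set.mem_image, Finset.mem_coe] at hq
      obtain ⟨a, ha, rfl⟩ := hq
      exact hIsub ha
    have hqG : Quotient.mk τ p ∉ G := hp
    obtain ⟨Z, hZ, hZeq0⟩ := hG _ hJ hJsub _ hqG
    have hZeq : insert (Quotient.mk τ p) (I.image (Quotient.mk τ)) = Z.image (Quotient.mk τ) := by
      rw [← hZeq0]; congr!
    have hpI : p ∉ I := fun hpI => hp (hIsub hpI)
    set σ : V → V := fun v =>
      if h : ∃ w ∈ insert p I, Quotient.mk τ w = Quotient.mk τ v then h.choose else v with hσdef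
    have hspec : ∀ z ∈ Z, σ z ∈ insert p I ∧ Quotient.mk τ (σ z) = Quotient.mk τ z := by
      intro z hz
      have hmem : Quotient.mk τ z ∈ insert (Quotient.mk τ p) (I.image (Quotient.mk τ)) := by
        rw [hZeq]; exact Finset.mem_image_of_mem _ hz
      have hex : ∃ w ∈ insert p I, Quotient.mk τ w = Quotient.mk τ z := by
        rcases Finset.mem_insert.mp hmem with h | h
        · exact ⟨p, Finset.mem_insert_self _ _, h.symm⟩
        · obtain ⟨a, ha, haz⟩ := Finset.mem_image.mp h
          exact ⟨a, Finset.mem_insert_of_mem ha, haz⟩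
      rw [hσdef]
      simp only [dif_pos hex]
      exact hex.choose_spec
    have hcl : ∀ z ∈ Z, cl faces {σ z} = cl faces {z} := fun z hz =>
      hτ _ _ (Quotient.exact (hspec z hz).2)
    have hface : Z.image σ ∈ faces := face_of_map hsc hbr hZ σ hcl
    have hsubs : Z.image σ ⊆ insert p I := by
      intro v hv
      obtain ⟨z, hz, rfl⟩ := Finset.mem_image.mp hv
      exact (hspec z hz).1
    have hinjZ : ∀ z₁ ∈ Z, ∀ z₂ ∈ Z, Quotient.mk τ z₁ = Quotient.mk τ z₂ → z₁ = z₂ :=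
      fun z₁ h₁ z₂ h₂ he => inj_on_face hbr hZ h₁ h₂ (hτ _ _ (Quotient.exact he))
    have hinjI : ∀ z₁ ∈ I, ∀ z₂ ∈ I, Quotient.mk τ z₁ = Quotient.mk τ z₂ → z₁ = z₂ :=
      fun z₁ h₁ z₂ h₂ he => inj_on_face hbr hI h₁ h₂ (hτ _ _ (Quotient.exact he))
    have hcard1 : (Z.image σ).card = Z.card := by
      apply Finset.card_image_of_injOn
      intro z₁ h₁ z₂ h₂ he
      apply hinjZ z₁ h₁ z₂ h₂
      rw [← (hspec z₁ h₁).2, ← (hspec z₂ h₂).2, he]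
    have hcard2 : (Z.image (Quotient.mk τ)).card = Z.card :=
      Finset.card_image_of_injOn fun z₁ h₁ z₂ h₂ he => hinjZ z₁ h₁ z₂ h₂ he
    have hcard3 : (I.image (Quotient.mk τ)).card = I.card :=
      Finset.card_image_of_injOn fun z₁ h₁ z₂ h₂ he => hinjI z₁ h₁ z₂ h₂ he
    have hpnot : Quotient.mk τ p ∉ I.image (Quotient.mk τ) := fun hc => hqG (hJsub hc)
    have hcards : (insert p I).card ≤ (Z.image σ).card := by
      rw [hcard1, Finset.card_insert_of_notMem hpI, ← hcard2, ← hZeq,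
        Finset.card_insert_of_notMem hpnot, hcard3]
    have heq : Z.image σ = insert p I := Finset.eq_of_subset_of_card_le hsubs hcards
    rw [← heq]
    exact hface
end

section
/- Let H = (V,H) be a boolean representable simplicial complex and τ ⊆ η an equivalence relation on V with projection φ: V → V/τ. Then the quotient complex H/τ = (V/τ, {Xφ : X ∈ H}) is boolean representable. -/
open scoped Classical

variable {V : Type}

lemma mem_flat_iff_cl {faces : Set (Finset V)} {F : Set V} (hF : IsFlat faces F)
    (a : V) : a ∈ F ↔ cl faces {a} ⊆ F := by
  constructor
  · intro ha
    exact Set.sInter_subset_of_mem ⟨hF, by simpa using ha⟩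
  · intro h
    apply h
    intro G hG
    exact hG.2 rfl

lemma flat_sat {faces : Set (Finset V)} {F : Set V} (hF : IsFlat faces F)
    {τ : Setoid V} (hτ : ∀ a b : V, τ.r a b → cl faces {a} = cl faces {b})
    {a b : V} (hab : τ.r a b) (ha : a ∈ F) : b ∈ F := by
  rw [mem_flat_iff_cl hF, ← hτ a b hab, ← mem_flat_iff_cl hF]
  exact ha

lemma flat_sat' {faces : Set (Finset V)} {F : Set V} (hF : IsFlat faces F)
    {τ : Setoid V} (hτ : ∀ a b : V, τ.r a b → cl faces {a} = cl faces {b})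
    {w : V} (hw : Quotient.mk τ w ∈ Quotient.mk τ '' F) : w ∈ F := by
  obtain ⟨f, hf, hfw⟩ := hw
  exact flat_sat hF hτ (Quotient.exact hfw) hf

theorem quot_brep [Fintype V] [Nonempty V]
    {faces : Set (Finset V)} (hsc : IsSC faces) (hbr : BRep faces)
    (τ : Setoid V) (hτ : ∀ a b : V, τ.r a b → cl faces {a} = cl faces {b}) :
    BRep (quotFaces faces τ) := by
  rintro Y ⟨X, hX, rfl⟩
  obtain ⟨k, F, x, hF, hmono, hinj, hx, rfl⟩ := hbr X hX
  refine ⟨k, fun i => Quotient.mk τ '' F i, fun i => Quotient.mk τ (x i),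
    ?_, ?_, ?_, ?_, ?_⟩
  · -- flats
    intro i I hI hIsub p hp
    obtain ⟨Z, hZ, rfl⟩ := hI
    obtain ⟨v, rfl⟩ := @Quotient.exists_rep _ τ p
    have hZF : (Z : Set V) ⊆ F i := by
      intro z hz
      exact flat_sat' (hF i) hτ (hIsub (by simpa using Finset.mem_image_of_mem (Quotient.mk τ) hz))
    have hv : v ∉ F i := fun hv => hp ⟨v, hv, rfl⟩
    refine ⟨insert v Z, hF i Z hZ hZF v hv, ?_⟩
    ext q
    simp [Finset.image_insert]
  · -- strict mono
    intro i j hij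
    refine (Set.image_mono (hmono hij).le).ssubset_of_ne ?_
    intro heq
    refine (hmono hij).ne ?_
    apply Set.Subset.antisymm (hmono hij).le
    intro w hw
    exact flat_sat' (hF i) hτ (heq ▸ ⟨w, hw, rfl⟩)
  · -- injective
    have key : ∀ i j : Fin k, i < j → Quotient.mk τ (x i) ≠ Quotient.mk τ (x j) := by
      intro i j hij heq
      have h1 : x i ∈ F j.castSucc := by
        apply hmono.monotone _ (hx i).1
        rw [Fin.le_def]
        simp only [Fin.val_succ, Fin.coe_castSucc]
        exact hij
      exact (hx j).2 (flat_sat (hF j.castSucc) hτ (Quotient.exact heq) h1)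
    intro i j heq
    by_contra hne
    rcases lt_or_gt_of_ne hne with h | h
    · exact key i j h heq
    · exact key j i h heq.symm
  · -- transversal
    intro i
    refine ⟨⟨x i, (hx i).1, rfl⟩, fun h => (hx i).2 (flat_sat' (hF i.castSucc) hτ h)⟩
  · ext q
    simp [Finset.image_image]
end

section
/- Let M be an R × V boolean matrix representing a simplicial complex H = (V,H) (H is the set of M-independent column subsets, and all singletons are independent). For a, b ∈ V: columns a and b of M are equal if and only if {a,b} ∉ H or a = b. -/
open scoped Classical

variable {V : Type}

def MIndep {R : Type} (M : R → V → Bool) (X : Finset V) : Prop :=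
  ∃ (n : ℕ) (rows : Fin n → R) (cols : Fin n → V),
    Function.Injective rows ∧ Function.Injective cols ∧
    X = Finset.image cols Finset.univ ∧
    (∀ i : Fin n, M (rows i) (cols i) = true) ∧
    (∀ i j : Fin n, i < j → M (rows i) (cols j) = false)

lemma pair_indep {R : Type} {M : R → V → Bool} {r r' : R} {x y : V}
    (hxy : x ≠ y) (h1 : M r x = true) (h2 : M r y = false) (h3 : M r' y = true) :
    MIndep M ({x, y} : Finset V) := by
  have hrr : r ≠ r' := by
    intro h; rw [h, h3] at h2; exact absurd h2 (by simp)
  refine ⟨2, ![r, r'], ![x, y], ?_, ?_, ?_, ?_, ?_⟩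
  · intro i j hij
    fin_cases i <;> fin_cases j <;> simp_all
  · intro i j hij
    fin_cases i <;> fin_cases j <;> simp_all
  · ext v; simp [Fin.exists_fin_two, eq_comm]
  · intro i; fin_cases i <;> simpa
  · intro i j hij
    fin_cases i <;> fin_cases j <;> simp_all

theorem equal_columns_iff_pair_not_face [Fintype V] [Nonempty V]
    {R : Type} (M : R → V → Bool) {faces : Set (Finset V)}
    (hsc : IsSC faces) (hrep : faces = {X : Finset V | MIndep M X}) (a b : V) :
    (∀ r : R, M r a = M r b) ↔ (({a, b} : Finset V) ∉ faces ∨ a = b) := by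
  have hexr : ∀ v : V, ∃ r : R, M r v = true := by
    intro v
    have hv : ({v} : Finset V) ∈ faces := hsc.1 v
    rw [hrep] at hv
    obtain ⟨n, rows, cols, _, _, hX, htrue, _⟩ := hv
    have hv2 : v ∈ Finset.image cols Finset.univ := by rw [← hX]; simp
    obtain ⟨i, _, hi⟩ := Finset.mem_image.mp hv2
    exact ⟨rows i, by rw [← hi] at *; exact htrue i⟩
  constructor
  · intro h
    by_cases hab : a = b
    · exact Or.inr hab
    left; intro hf
    rw [hrep] at hf
    obtain ⟨n, rows, cols, hrinj, hcinj, hX, htrue, hfalse⟩ := hf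
    have ha : a ∈ Finset.image cols Finset.univ := by rw [← hX]; simp
    have hb : b ∈ Finset.image cols Finset.univ := by rw [← hX]; simp
    obtain ⟨i, _, hi⟩ := Finset.mem_image.mp ha
    obtain ⟨j, _, hj⟩ := Finset.mem_image.mp hb
    have hij : i ≠ j := by rintro rfl; exact hab (hi ▸ hj ▸ rfl)
    rcases lt_or_gt_of_ne hij with hlt | hgt
    · have t := htrue i
      have f := hfalse i j hlt
      rw [hi] at t; rw [hj] at f
      rw [h (rows i), f] at t; exact absurd t (by simp)
    · have t := htrue j
      have f := hfalse j i hgt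
      rw [hj] at t; rw [hi] at f
      rw [← h (rows j), f] at t; exact absurd t (by simp)
  · rintro (hf | rfl)
    · intro r
      by_contra hne
      apply hf
      rw [hrep]
      have hab : a ≠ b := by rintro rfl; exact hne rfl
      cases h1 : M r a <;> cases h2 : M r b <;> rw [h1, h2] at hne <;> try simp at hne
      · obtain ⟨r', hr'⟩ := hexr a
        have := pair_indep hab.symm h2 h1 hr'
        rwa [Finset.pair_comm] at this
      · obtain ⟨r', hr'⟩ := hexr b
        exact pair_indep hab h1 h2 hr'
    · intro r; rfl
end
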